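/- arXiv:2406.19737 — 3 statements merged into one kernel-verified Lean document; each statement's English description precedes it below -/
import Mathlib

section
/- Let b ∈ H^∞ be non-constant and φ a symbol with bounded composition operator C_φ on H². Then the multiplication operator T_b does not belong to the weak-operator-topology closure of the algebra {p(C_φ) : p polynomial}. -/
open Complex Polynomial

/-- The Hardy–Hilbert space `H²` of Dirichlet series, realized as `ℓ²` of coefficients. -/
noncomputable abbrev HardyDirichlet := lp (fun _ : ℕ => ℂ) 2

/-- Evaluation of the Dirichlet series with coefficient sequence `x` at `s`:
`∑ₙ xₙ (n+1)^{-s}`. -/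
noncomputable def dirEval (x : HardyDirichlet) (s : ℂ) : ℂ :=
  ∑' n : ℕ, x n * ((n : ℂ) + 1) ^ (-s)

noncomputable def kerFun (s : ℂ) (n : ℕ) : ℂ := (starRingEnd ℂ) (((n : ℂ) + 1) ^ (-s))

lemma norm_kerFun (s : ℂ) (n : ℕ) : ‖kerFun s n‖ = ((n : ℝ) + 1) ^ (-s.re) := by
  rw [kerFun, RCLike.norm_conj]
  have h : ((n : ℂ) + 1) = (((n : ℝ) + 1 : ℝ) : ℂ) := by push_cast; ring
  rw [h, Complex.norm_cpow_eq_rpow_re_of_pos (by positivity)]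
  simp

lemma kerFun_memℓp {s : ℂ} (hs : 1 / 2 < s.re) : Memℓp (kerFun s) 2 := by
  apply memℓp_gen
  have h2 : Summable (fun n : ℕ => ((n : ℝ)) ^ (-(2 * s.re))) := by
    rw [Real.summable_nat_rpow]; linarith
  have h3 := (summable_nat_add_iff 1).mpr h2
  apply h3.congr
  intro n
  rw [norm_kerFun]
  rw [← Real.rpow_mul (by positivity)]
  push_cast
  norm_num
  ring_nf

noncomputable def ker {s : ℂ} (hs : 1 / 2 < s.re) : HardyDirichlet :=
  ⟨kerFun s, kerFun_memℓp hs⟩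

lemma dirEval_eq_inner {s : ℂ} (hs : 1 / 2 < s.re) (x : HardyDirichlet) :
    dirEval x s = @inner ℂ _ _ (ker hs) x := by
  rw [lp.inner_eq_tsum, dirEval]
  apply tsum_congr
  intro n
  have h1 : (ker hs) n = kerFun s n := rfl
  simp only [RCLike.inner_apply, h1, kerFun, RingHom.id_apply, starRingEnd_self_apply,
    Complex.conj_conj]

noncomputable def evalFunctional {s : ℂ} (hs : 1 / 2 < s.re) : HardyDirichlet →L[ℂ] ℂ :=
  innerSL ℂ (ker hs)

lemma evalFunctional_apply {s : ℂ} (hs : 1 / 2 < s.re) (x : HardyDirichlet) :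
    evalFunctional hs x = dirEval x s := by
  rw [dirEval_eq_inner hs]; rfl

noncomputable def eZero : HardyDirichlet := lp.single 2 0 1

lemma dirEval_eZero (s : ℂ) : dirEval eZero s = 1 := by
  rw [dirEval]
  rw [tsum_eq_single 0 (by
    intro n hn
    have : eZero n = 0 := lp.single_apply_ne 2 0 1 hn
    simp [this])]
  have h0 : eZero 0 = 1 := lp.single_apply_self 2 0 1
  simp [h0]

lemma dirEval_pow_eZero (φ : ℂ → ℂ)
    (hφ : ∀ s : ℂ, 1 / 2 < s.re → 1 / 2 < (φ s).re)
    (Cφ : HardyDirichlet →L[ℂ] HardyDirichlet)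
    (hCφ : ∀ x : HardyDirichlet, ∀ s : ℂ, 1 / 2 < s.re → dirEval (Cφ x) s = dirEval x (φ s)) :
    ∀ (k : ℕ) (s : ℂ), 1 / 2 < s.re → dirEval ((Cφ ^ k) eZero) s = 1 := by
  intro k
  induction k with
  | zero => intro s hs; simpa using dirEval_eZero s
  | succ n ih =>
    intro s hs
    have h1 : (Cφ ^ (n + 1)) eZero = Cφ ((Cφ ^ n) eZero) := by
      rw [pow_succ']; rfl
    rw [h1, hCφ _ s hs, ih (φ s) (hφ s hs)]

lemma dirEval_aeval_eZero (φ : ℂ → ℂ)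
    (hφ : ∀ s : ℂ, 1 / 2 < s.re → 1 / 2 < (φ s).re)
    (Cφ : HardyDirichlet →L[ℂ] HardyDirichlet)
    (hCφ : ∀ x : HardyDirichlet, ∀ s : ℂ, 1 / 2 < s.re → dirEval (Cφ x) s = dirEval x (φ s))
    (p : Polynomial ℂ) {s : ℂ} (hs : 1 / 2 < s.re) :
    dirEval ((aeval Cφ p) eZero) s = p.eval 1 := by
  rw [← evalFunctional_apply hs, Polynomial.aeval_eq_sum_range]
  rw [ContinuousLinearMap.sum_apply]
  simp only [ContinuousLinearMap.smul_apply, map_sum, map_smul]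
  have : ∀ i ∈ Finset.range (p.natDegree + 1),
      p.coeff i • evalFunctional hs ((Cφ ^ i) eZero) = p.coeff i := by
    intro i _
    rw [evalFunctional_apply hs, dirEval_pow_eZero φ hφ Cφ hCφ i s hs, smul_eq_mul, mul_one]
  rw [Finset.sum_congr rfl this, Polynomial.eval_eq_sum_range]
  simp


/-- For a nonconstant `b ∈ H^∞` (with `b ∘ φ = b`), the multiplication
operator `T_b` does not belong to the WOT-closure of the polynomial algebra generated by the
composition operator `C_φ` on `H²`. -/
theorem multiplication_not_in_wot_closure
    (φ b : ℂ → ℂ)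
    (hφ : ∀ s : ℂ, 1 / 2 < s.re → 1 / 2 < (φ s).re)
    (Cφ Tb : HardyDirichlet →L[ℂ] HardyDirichlet)
    (hCφ : ∀ x : HardyDirichlet, ∀ s : ℂ, 1 / 2 < s.re → dirEval (Cφ x) s = dirEval x (φ s))
    (hTb : ∀ x : HardyDirichlet, ∀ s : ℂ, 1 / 2 < s.re → dirEval (Tb x) s = b s * dirEval x s)
    (hbHtwo : ∃ B : HardyDirichlet, ∀ s : ℂ, 1 / 2 < s.re → dirEval B s = b s)
    (hbbdd : ∃ M : ℝ, ∀ s : ℂ, 1 / 2 < s.re → ‖b s‖ ≤ M)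
    (hnonconst : ∃ s t : ℂ, 1 / 2 < s.re ∧ 1 / 2 < t.re ∧ b s ≠ b t)
    (hfix : ∀ s : ℂ, 1 / 2 < s.re → b (φ s) = b s) :
    ContinuousLinearMapWOT.ofCLM Tb ∉
      closure (⇑(ContinuousLinearMapWOT.linearEquiv (σ := RingHom.id ℂ) (E := HardyDirichlet) (F := HardyDirichlet) ℂ).symm ''
        {A : HardyDirichlet →L[ℂ] HardyDirichlet | ∃ p : Polynomial ℂ, A = aeval Cφ p}) := by

  obtain ⟨s, t, hs, ht, hne⟩ := hnonconst
  set Λ : (HardyDirichlet →WOT[ℂ] HardyDirichlet) → ℂ :=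
    fun A => evalFunctional hs (A eZero) - evalFunctional ht (A eZero) with hΛ
  have hΛcont : Continuous Λ := by
    exact (ContinuousLinearMapWOT.continuous_dual_apply eZero (evalFunctional hs)).sub
      (ContinuousLinearMapWOT.continuous_dual_apply eZero (evalFunctional ht))
  have hclosed : IsClosed (Λ ⁻¹' {0}) := isClosed_singleton.preimage hΛcont
  have hsub : (⇑(ContinuousLinearMapWOT.linearEquiv (σ := RingHom.id ℂ) (E := HardyDirichlet) (F := HardyDirichlet) ℂ).symm ''
      {A : HardyDirichlet →L[ℂ] HardyDirichlet | ∃ p : Polynomial ℂ, A = aeval Cφ p}) ⊆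
      Λ ⁻¹' {0} := by
    rintro _ ⟨A, ⟨p, rfl⟩, rfl⟩
    have hApp : ∀ x : HardyDirichlet,
        ((ContinuousLinearMapWOT.linearEquiv (σ := RingHom.id ℂ) (E := HardyDirichlet) (F := HardyDirichlet) ℂ).symm (aeval Cφ p)) x
          = (aeval Cφ p) x := fun x => rfl
    simp only [Set.mem_preimage, Set.mem_singleton_iff, hΛ, hApp,
      evalFunctional_apply hs, evalFunctional_apply ht,
      dirEval_aeval_eZero φ hφ Cφ hCφ p hs, dirEval_aeval_eZero φ hφ Cφ hCφ p ht, sub_self]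
  intro hmem
  have h0 : Λ (ContinuousLinearMapWOT.ofCLM Tb) = 0 := by
    have := closure_minimal hsub hclosed hmem
    simpa using this
  have hval : Λ (ContinuousLinearMapWOT.ofCLM Tb) = b s - b t := by
    have hApp : ∀ x : HardyDirichlet,
        (ContinuousLinearMapWOT.ofCLM Tb) x = Tb x := fun x => rfl
    simp only [hΛ, hApp, evalFunctional_apply hs, evalFunctional_apply ht,
      hTb eZero s hs, hTb eZero t ht, dirEval_eZero, mul_one]
  rw [hval] at h0
  exact hne (sub_eq_zero.mp h0)
end

section
/- Let X be a Banach space, T ∈ B(X) with ‖T‖ < 1, and suppose T has the double commutant property. Then 1 ⊕ T acting on ℂ ⊕ X has the double commutant property. -/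
open Polynomial

/-- An operator `A` on a complex Banach space has the **double commutant property** if the
weak-operator-topology closure of the polynomial algebra generated by `A` equals the double
commutant `{A}'' = {S | ∀ R, RA = AR → RS = SR}` of `A`. -/
def HasDoubleCommutantProperty {X : Type*} [NormedAddCommGroup X] [NormedSpace ℂ X]
    (A : X →L[ℂ] X) : Prop :=
  closure ((ContinuousLinearMapWOT.ofCLM : (X →L[ℂ] X) → X →WOT[ℂ] X) ''
      {P : X →L[ℂ] X | ∃ p : Polynomial ℂ, P = aeval A p}) =
    (ContinuousLinearMapWOT.ofCLM : (X →L[ℂ] X) → X →WOT[ℂ] X) ''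
      {S : X →L[ℂ] X | ∀ R : X →L[ℂ] X, R * A = A * R → R * S = S * R}

set_option maxHeartbeats 1000000
set_option synthInstance.maxHeartbeats 400000

/-- The linear equivalence `E →L[𝕜] F ≃ₗ E →WOT[𝕜] F` (old Mathlib's `toWOT`). -/
noncomputable def ContinuousLinearMap.toWOT (𝕜 : Type*) [NontriviallyNormedField 𝕜]
    (E F : Type*) [NormedAddCommGroup E] [NormedSpace 𝕜 E] [NormedAddCommGroup F]
    [NormedSpace 𝕜 F] : (E →L[𝕜] F) ≃ₗ[𝕜] (E →WOT[𝕜] F) :=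
  (ContinuousLinearMapWOT.linearEquiv 𝕜).symm

lemma ContinuousLinearMap.toWOT_apply' {E F : Type*} [NormedAddCommGroup E] [NormedSpace ℂ E]
    [NormedAddCommGroup F] [NormedSpace ℂ F] (A : E →L[ℂ] F) (x : E) :
    (ContinuousLinearMap.toWOT ℂ E F A) x = A x := rfl

lemma ContinuousLinearMap.ofCLM_eq_toWOT {E F : Type*} [NormedAddCommGroup E]
    [NormedSpace ℂ E] [NormedAddCommGroup F] [NormedSpace ℂ F] :
    (ContinuousLinearMapWOT.ofCLM : (E →L[ℂ] F) → E →WOT[ℂ] F) =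
      ⇑(ContinuousLinearMap.toWOT ℂ E F) := rfl

namespace OneOplusDCAux

section

variable {E : Type*} [NormedAddCommGroup E] [NormedSpace ℂ E]

/-- The block-diagonal operator `diag(a, D)` acting on `ℂ × E`. -/
noncomputable def dg (a : ℂ) (D : E →L[ℂ] E) : (ℂ × E) →L[ℂ] (ℂ × E) :=
  (a • ContinuousLinearMap.id ℂ ℂ).prodMap D

lemma dg_apply' (a : ℂ) (D : E →L[ℂ] E) (z : ℂ × E) : dg a D z = (a * z.1, D z.2) := rfl

lemma dg_apply (a : ℂ) (D : E →L[ℂ] E) (c : ℂ) (x : E) : dg a D (c, x) = (a * c, D x) := rfl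

lemma dg_mul (a b : ℂ) (D C : E →L[ℂ] E) : dg a D * dg b C = dg (a * b) (D * C) := by
  refine ContinuousLinearMap.ext fun z => ?_
  simp [ContinuousLinearMap.mul_apply, dg_apply', mul_assoc]

lemma dg_add (a b : ℂ) (D C : E →L[ℂ] E) : dg a D + dg b C = dg (a + b) (D + C) := by
  refine ContinuousLinearMap.ext fun z => ?_
  simp [dg_apply', add_mul]

lemma block_decomp (S : (ℂ × E) →L[ℂ] (ℂ × E))
    (h1 : ∀ x : E, (S (0, x)).1 = 0) (h2 : ∀ c : ℂ, (S (c, 0)).2 = 0) :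
    S = dg (S (1, 0)).1
      ((ContinuousLinearMap.snd ℂ ℂ E).comp (S.comp (ContinuousLinearMap.inr ℂ ℂ E))) := by
  refine ContinuousLinearMap.ext fun z => ?_
  obtain ⟨c, x⟩ := z
  have hz : (c, x) = (c, (0 : E)) + ((0 : ℂ), x) := by simp
  have hsm : ((c : ℂ), (0 : E)) = c • ((1 : ℂ), (0 : E)) := by simp
  rw [hz, map_add, dg_apply]
  refine Prod.ext ?_ ?_
  · have : (S (c, 0)).1 = c * (S (1, 0)).1 := by
      rw [hsm, map_smul]; simp [mul_comm]
    simp [this, h1 x, mul_comm]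
  · simp [h2 c]

lemma comm_iff [CompleteSpace E] (T : E →L[ℂ] E) (hT : ‖T‖ < 1) (R : (ℂ × E) →L[ℂ] (ℂ × E)) :
    R * ((ContinuousLinearMap.id ℂ ℂ).prodMap T) = ((ContinuousLinearMap.id ℂ ℂ).prodMap T) * R ↔
      ∃ (a : ℂ) (D : E →L[ℂ] E), D * T = T * D ∧ R = dg a D := by
  set A := (ContinuousLinearMap.id ℂ ℂ).prodMap T with hA
  have hApt : ∀ (c : ℂ) (x : E), A (c, x) = (c, T x) := fun c x => rfl
  constructor
  · intro h
    have hpt : ∀ (c : ℂ) (x : E), R (c, T x) = ((R (c, x)).1, T (R (c, x)).2) := by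
      intro c x
      have := congrArg (fun f : (ℂ × E) →L[ℂ] (ℂ × E) => f (c, x)) h
      simpa [ContinuousLinearMap.mul_apply, hApt] using this
    obtain ⟨u, hu⟩ := isUnit_one_sub_of_norm_lt_one hT
    have hinj : ∀ t : E, T t = t → t = 0 := by
      intro t ht
      have h0 : ((1 : E →L[ℂ] E) - T) t = 0 := by
        simp [ContinuousLinearMap.sub_apply, ht]
      have h1 : ((↑u⁻¹ * ↑u : E →L[ℂ] E)) t = t := by
        rw [u.inv_mul]; rfl
      rw [ContinuousLinearMap.mul_apply, hu, h0] at h1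
      simpa using h1.symm
    have hsurj : ∀ x : E, ∃ z : E, z - T z = x := by
      intro x
      refine ⟨(↑u⁻¹ : E →L[ℂ] E) x, ?_⟩
      have h1 : ((↑u * ↑u⁻¹ : E →L[ℂ] E)) x = x := by
        rw [u.mul_inv]; rfl
      rw [ContinuousLinearMap.mul_apply, hu] at h1
      simpa [ContinuousLinearMap.sub_apply] using h1
    have h2 : ∀ c : ℂ, (R (c, 0)).2 = 0 := by
      intro c
      refine hinj _ ?_
      have := hpt c 0
      rw [map_zero] at this
      exact (congrArg Prod.snd this).symm
    have h1' : ∀ x : E, (R (0, x)).1 = 0 := by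
      have hfix : ∀ x : E, (R (0, T x)).1 = (R (0, x)).1 := by
        intro x
        have := congrArg Prod.fst (hpt 0 x)
        simpa using this
      intro x
      obtain ⟨z, hz⟩ := hsurj x
      have hzz : ((0 : ℂ), x) = ((0 : ℂ), z) - ((0 : ℂ), T z) := by
        rw [Prod.mk_sub_mk, hz]; simp
      rw [hzz, map_sub]
      have := hfix z
      simp [Prod.fst_sub, this]
    refine ⟨(R (1, 0)).1, _, ?_, block_decomp R h1' h2⟩
    refine ContinuousLinearMap.ext fun x => ?_
    have := congrArg Prod.snd (hpt 0 x)
    simpa [ContinuousLinearMap.mul_apply] using this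
  · rintro ⟨a, D, hD, rfl⟩
    refine ContinuousLinearMap.ext fun z => ?_
    obtain ⟨c, x⟩ := z
    have hDx : D (T x) = T (D x) := congrArg (fun f : E →L[ℂ] E => f x) hD
    simp [ContinuousLinearMap.mul_apply, hApt, dg_apply, dg_apply', hDx]

lemma dc_iff [CompleteSpace E] (T : E →L[ℂ] E) (hT : ‖T‖ < 1) (S : (ℂ × E) →L[ℂ] (ℂ × E)) :
    (∀ R : (ℂ × E) →L[ℂ] (ℂ × E),
        R * ((ContinuousLinearMap.id ℂ ℂ).prodMap T) =
          ((ContinuousLinearMap.id ℂ ℂ).prodMap T) * R →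
        R * S = S * R) ↔
      ∃ (a : ℂ) (D : E →L[ℂ] E),
        (∀ R' : E →L[ℂ] E, R' * T = T * R' → R' * D = D * R') ∧ S = dg a D := by
  constructor
  · intro h
    have hP : dg 1 (0 : E →L[ℂ] E) * S = S * dg 1 0 :=
      h _ ((comm_iff T hT _).mpr ⟨1, 0, by simp, rfl⟩)
    have hPpt : ∀ (c : ℂ) (x : E), ((S (c, x)).1, (0 : E)) = S (c, 0) := by
      intro c x
      have := congrArg (fun f : (ℂ × E) →L[ℂ] (ℂ × E) => f (c, x)) hP
      simpa [ContinuousLinearMap.mul_apply, dg_apply, dg_apply'] using this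
    have h1 : ∀ x : E, (S (0, x)).1 = 0 := by
      intro x
      have := congrArg Prod.fst (hPpt 0 x)
      rw [show ((0 : ℂ), (0 : E)) = 0 from rfl, map_zero] at this
      simpa using this
    have h2 : ∀ c : ℂ, (S (c, 0)).2 = 0 := by
      intro c
      have := congrArg Prod.snd (hPpt c 0)
      simpa using this.symm
    refine ⟨(S (1, 0)).1, _, ?_, block_decomp S h1 h2⟩
    intro R' hR'
    have hc : dg 0 R' * S = S * dg 0 R' :=
      h _ ((comm_iff T hT _).mpr ⟨0, R', hR', rfl⟩)
    refine ContinuousLinearMap.ext fun x => ?_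
    have := congrArg (fun f : (ℂ × E) →L[ℂ] (ℂ × E) => f ((0 : ℂ), x)) hc
    simp only [ContinuousLinearMap.mul_apply, dg_apply, dg_apply', mul_zero] at this
    have := congrArg Prod.snd this
    simpa [ContinuousLinearMap.mul_apply, ContinuousLinearMap.comp_apply] using this
  · rintro ⟨a, D, hD, rfl⟩
    intro R hR
    obtain ⟨b, C, hC, rfl⟩ := (comm_iff T hT R).mp hR
    have hCD : C * D = D * C := hD C hC
    refine ContinuousLinearMap.ext fun z => ?_
    obtain ⟨c, x⟩ := z
    have hCDx : C (D x) = D (C x) := congrArg (fun f : E →L[ℂ] E => f x) hCD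
    simp [ContinuousLinearMap.mul_apply, dg_apply, dg_apply', hCDx]
    ring

lemma aeval_prodMap (T : E →L[ℂ] E) (p : ℂ[X]) :
    aeval ((ContinuousLinearMap.id ℂ ℂ).prodMap T) p = dg (p.eval 1) (aeval T p) := by
  set A := (ContinuousLinearMap.id ℂ ℂ).prodMap T with hA
  have hA1 : A = dg 1 T := by
    refine ContinuousLinearMap.ext fun z => ?_
    obtain ⟨c, x⟩ := z
    simp [dg_apply', hA]
  induction p using Polynomial.induction_on with
  | C a =>
    rw [aeval_C, aeval_C, eval_C]
    refine ContinuousLinearMap.ext fun z => ?_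
    simp [Algebra.algebraMap_eq_smul_one, dg_apply']
    rfl
  | add p q hp hq =>
    rw [map_add, map_add, hp, hq, dg_add, eval_add]
  | monomial n a hp =>
    have h : (C a : ℂ[X]) * Polynomial.X ^ (n + 1) = (C a * Polynomial.X ^ n) * Polynomial.X := by
      ring
    rw [h, map_mul, hp, aeval_X, hA1, dg_mul]
    simp only [map_mul, aeval_X, eval_mul, eval_X, mul_one]

lemma pow_apply (T : E →L[ℂ] E) (n : ℕ) (c : ℂ) (x : E) :
    (((ContinuousLinearMap.id ℂ ℂ).prodMap T) ^ n) (c, x) = (c, (T ^ n) x) := by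
  induction n generalizing x with
  | zero => simp
  | succ n ih =>
    rw [pow_succ, ContinuousLinearMap.mul_apply]
    have h0 : ((ContinuousLinearMap.id ℂ ℂ).prodMap T) (c, x) = (c, T x) := rfl
    rw [h0, ih (T x)]
    rfl

lemma tendsto_pow_apply (T : E →L[ℂ] E) (hT : ‖T‖ < 1) (x : E) :
    Filter.Tendsto (fun n => (T ^ n) x) Filter.atTop (nhds 0) := by
  have hb : ∀ n, ‖(T ^ n) x‖ ≤ ‖T‖ ^ n * ‖x‖ := by
    intro n
    induction n with
    | zero => simp
    | succ n ih =>
      have h1 : (T ^ (n + 1)) x = T ((T ^ n) x) := by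
        rw [pow_succ']; rfl
      calc ‖(T ^ (n + 1)) x‖ = ‖T ((T ^ n) x)‖ := by rw [h1]
      _ ≤ ‖T‖ * ‖(T ^ n) x‖ := T.le_opNorm _
      _ ≤ ‖T‖ * (‖T‖ ^ n * ‖x‖) := mul_le_mul_of_nonneg_left ih (norm_nonneg T)
      _ = ‖T‖ ^ (n + 1) * ‖x‖ := by ring
  refine squeeze_zero_norm hb ?_
  have := (tendsto_pow_atTop_nhds_zero_of_lt_one (norm_nonneg T) hT).mul_const ‖x‖
  simpa using this

/-- lower-right corner, WOT-level -/
noncomputable def piW (W : (ℂ × E) →WOT[ℂ] (ℂ × E)) : E →WOT[ℂ] E :=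
  ContinuousLinearMap.toWOT ℂ E E
    ((ContinuousLinearMap.snd ℂ ℂ E).comp
      ((((ContinuousLinearMap.toWOT ℂ (ℂ × E) (ℂ × E)).symm W)).comp
        (ContinuousLinearMap.inr ℂ ℂ E)))

/-- upper-right corner -/
noncomputable def c12 (W : (ℂ × E) →WOT[ℂ] (ℂ × E)) : E →WOT[ℂ] ℂ :=
  ContinuousLinearMap.toWOT ℂ E ℂ
    ((ContinuousLinearMap.fst ℂ ℂ E).comp
      ((((ContinuousLinearMap.toWOT ℂ (ℂ × E) (ℂ × E)).symm W)).comp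
        (ContinuousLinearMap.inr ℂ ℂ E)))

/-- lower-left corner -/
noncomputable def c21 (W : (ℂ × E) →WOT[ℂ] (ℂ × E)) : ℂ →WOT[ℂ] E :=
  ContinuousLinearMap.toWOT ℂ ℂ E
    ((ContinuousLinearMap.snd ℂ ℂ E).comp
      ((((ContinuousLinearMap.toWOT ℂ (ℂ × E) (ℂ × E)).symm W)).comp
        (ContinuousLinearMap.inl ℂ ℂ E)))

/-- embedding as lower-right block -/
noncomputable def iW (D : E →WOT[ℂ] E) : (ℂ × E) →WOT[ℂ] (ℂ × E) :=
  ContinuousLinearMap.toWOT ℂ (ℂ × E) (ℂ × E)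
    (dg 0 ((ContinuousLinearMap.toWOT ℂ E E).symm D))

lemma piW_cont : Continuous (piW (E := E)) := by
  refine ContinuousLinearMapWOT.continuous_of_dual_apply_continuous fun x y => ?_
  exact ContinuousLinearMapWOT.continuous_dual_apply ((0 : ℂ), x)
    (y.comp (ContinuousLinearMap.snd ℂ ℂ E))

lemma c12_cont : Continuous (c12 (E := E)) := by
  refine ContinuousLinearMapWOT.continuous_of_dual_apply_continuous fun x y => ?_
  exact ContinuousLinearMapWOT.continuous_dual_apply ((0 : ℂ), x)
    (y.comp (ContinuousLinearMap.fst ℂ ℂ E))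

lemma c21_cont : Continuous (c21 (E := E)) := by
  refine ContinuousLinearMapWOT.continuous_of_dual_apply_continuous fun c y => ?_
  exact ContinuousLinearMapWOT.continuous_dual_apply ((c : ℂ), (0 : E))
    (y.comp (ContinuousLinearMap.snd ℂ ℂ E))

lemma iW_cont : Continuous (iW (E := E)) := by
  refine ContinuousLinearMapWOT.continuous_of_dual_apply_continuous fun z y => ?_
  have h : (fun D : E →WOT[ℂ] E => y ((iW D) z))
      = fun D => (y.comp (ContinuousLinearMap.inr ℂ ℂ E)) (D z.2) := by
    funext D
    have h2 : (iW D) z = ((0 : ℂ), ((ContinuousLinearMap.toWOT ℂ E E).symm D) z.2) := by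
      show dg 0 _ z = _
      rw [dg_apply']; simp
    rw [h2]; rfl
  rw [h]
  exact ContinuousLinearMapWOT.continuous_dual_apply z.2 _

lemma piW_toWOT (S : (ℂ × E) →L[ℂ] (ℂ × E)) :
    piW (ContinuousLinearMap.toWOT ℂ (ℂ × E) (ℂ × E) S) =
      ContinuousLinearMap.toWOT ℂ E E
        ((ContinuousLinearMap.snd ℂ ℂ E).comp (S.comp (ContinuousLinearMap.inr ℂ ℂ E))) := by
  rw [piW, LinearEquiv.symm_apply_apply]

lemma c12_toWOT (S : (ℂ × E) →L[ℂ] (ℂ × E)) :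
    c12 (ContinuousLinearMap.toWOT ℂ (ℂ × E) (ℂ × E) S) =
      ContinuousLinearMap.toWOT ℂ E ℂ
        ((ContinuousLinearMap.fst ℂ ℂ E).comp (S.comp (ContinuousLinearMap.inr ℂ ℂ E))) := by
  rw [c12, LinearEquiv.symm_apply_apply]

lemma c21_toWOT (S : (ℂ × E) →L[ℂ] (ℂ × E)) :
    c21 (ContinuousLinearMap.toWOT ℂ (ℂ × E) (ℂ × E) S) =
      ContinuousLinearMap.toWOT ℂ ℂ E
        ((ContinuousLinearMap.snd ℂ ℂ E).comp (S.comp (ContinuousLinearMap.inl ℂ ℂ E))) := by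
  rw [c21, LinearEquiv.symm_apply_apply]

lemma iW_toWOT (D : E →L[ℂ] E) :
    iW (ContinuousLinearMap.toWOT ℂ E E D) =
      ContinuousLinearMap.toWOT ℂ (ℂ × E) (ℂ × E) (dg 0 D) := by
  rw [iW, LinearEquiv.symm_apply_apply]

/-- corner computations for a block-diagonal operator -/
lemma corner12_dg (a : ℂ) (D : E →L[ℂ] E) :
    (ContinuousLinearMap.fst ℂ ℂ E).comp ((dg a D).comp (ContinuousLinearMap.inr ℂ ℂ E)) = 0 := by
  refine ContinuousLinearMap.ext fun x => ?_
  simp [ContinuousLinearMap.comp_apply, dg_apply]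

lemma corner21_dg (a : ℂ) (D : E →L[ℂ] E) :
    (ContinuousLinearMap.snd ℂ ℂ E).comp ((dg a D).comp (ContinuousLinearMap.inl ℂ ℂ E)) = 0 := by
  refine ContinuousLinearMap.ext fun c => ?_
  simp [ContinuousLinearMap.comp_apply, dg_apply]

lemma corner22_dg (a : ℂ) (D : E →L[ℂ] E) :
    (ContinuousLinearMap.snd ℂ ℂ E).comp ((dg a D).comp (ContinuousLinearMap.inr ℂ ℂ E)) = D := by
  refine ContinuousLinearMap.ext fun x => ?_
  simp [ContinuousLinearMap.comp_apply, dg_apply]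

lemma E1_mem (T : E →L[ℂ] E) (hT : ‖T‖ < 1) :
    (ContinuousLinearMap.toWOT ℂ (ℂ × E) (ℂ × E)) (dg 1 0) ∈
      closure (⇑(ContinuousLinearMap.toWOT ℂ (ℂ × E) (ℂ × E)) ''
        {P | ∃ p : ℂ[X], P = aeval ((ContinuousLinearMap.id ℂ ℂ).prodMap T) p}) := by
  set A := (ContinuousLinearMap.id ℂ ℂ).prodMap T with hA
  have htend : Filter.Tendsto (fun n : ℕ => (ContinuousLinearMap.toWOT ℂ (ℂ × E) (ℂ × E)) (A ^ n))
      Filter.atTop (nhds ((ContinuousLinearMap.toWOT ℂ (ℂ × E) (ℂ × E)) (dg 1 0))) := by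
    rw [ContinuousLinearMapWOT.tendsto_iff_forall_dual_apply_tendsto]
    intro z y
    obtain ⟨c, x⟩ := z
    have key : ∀ n : ℕ,
        y (((ContinuousLinearMap.toWOT ℂ (ℂ × E) (ℂ × E)) (A ^ n)) (c, x))
          = y (c, 0) + (y.comp (ContinuousLinearMap.inr ℂ ℂ E)) ((T ^ n) x) := by
      intro n
      rw [ContinuousLinearMap.toWOT_apply', pow_apply]
      rw [show ((c : ℂ), (T ^ n) x) = (c, (0 : E)) + ((0 : ℂ), (T ^ n) x) by simp, map_add]
      rfl
    simp only [key]
    have h2 : y (((ContinuousLinearMap.toWOT ℂ (ℂ × E) (ℂ × E)) (dg 1 (0 : E →L[ℂ] E))) (c, x))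
        = y (c, 0) := by
      rw [ContinuousLinearMap.toWOT_apply', dg_apply']
      simp
    rw [h2]
    have h3 := ((y.comp (ContinuousLinearMap.inr ℂ ℂ E)).continuous.tendsto 0).comp
      (tendsto_pow_apply T hT x)
    simp only [Function.comp_def, map_zero] at h3
    simpa using tendsto_const_nhds.add h3
  refine mem_closure_of_tendsto htend ?_
  refine Filter.Eventually.of_forall fun n => ⟨A ^ n, ⟨Polynomial.X ^ n, ?_⟩, rfl⟩
  rw [map_pow, aeval_X]

end

end OneOplusDCAux

open OneOplusDCAux in
/-- If `‖T‖ < 1` and `T` has the double commutant property, then `1 ⊕ T`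
acting on `ℂ ⊕ X` has the double commutant property. -/
theorem one_oplus_contraction_double_commutant
    {X : Type*} [NormedAddCommGroup X] [NormedSpace ℂ X] [CompleteSpace X]
    (T : X →L[ℂ] X) (hT : ‖T‖ < 1) (hdcp : HasDoubleCommutantProperty T) :
    HasDoubleCommutantProperty ((ContinuousLinearMap.id ℂ ℂ).prodMap T) := by
  classical
  unfold HasDoubleCommutantProperty at hdcp ⊢
  rw [ContinuousLinearMap.ofCLM_eq_toWOT] at hdcp ⊢
  set A := (ContinuousLinearMap.id ℂ ℂ).prodMap T with hA
  set CT := closure (⇑(ContinuousLinearMap.toWOT ℂ X X) ''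
      {P : X →L[ℂ] X | ∃ p : Polynomial ℂ, P = aeval T p}) with hCT
  -- Step 1: rewrite the double commutant of `A` using the double commutant property of `T`.
  have hset : {S : (ℂ × X) →L[ℂ] (ℂ × X) | ∀ R : (ℂ × X) →L[ℂ] (ℂ × X),
        R * A = A * R → R * S = S * R}
      = {S | ∃ (a : ℂ) (D : X →L[ℂ] X),
          (ContinuousLinearMap.toWOT ℂ X X) D ∈ CT ∧ S = dg a D} := by
    ext S
    rw [Set.mem_setOf_eq, Set.mem_setOf_eq, hA, dc_iff T hT S]
    constructor
    · rintro ⟨a, D, hD, rfl⟩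
      exact ⟨a, D, by rw [hdcp]; exact ⟨D, hD, rfl⟩, rfl⟩
    · rintro ⟨a, D, hD, rfl⟩
      refine ⟨a, D, ?_, rfl⟩
      rw [hdcp] at hD
      obtain ⟨D', hD', hDD⟩ := hD
      rwa [← (ContinuousLinearMap.toWOT ℂ X X).injective hDD]
  rw [hset]
  -- Step 2: the closure computation.
  set L : Polynomial ℂ →ₗ[ℂ] ((ℂ × X) →WOT[ℂ] (ℂ × X)) :=
    (ContinuousLinearMap.toWOT ℂ (ℂ × X) (ℂ × X)).toLinearMap ∘ₗ
      (aeval A).toLinearMap with hL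
  set M : Submodule ℂ ((ℂ × X) →WOT[ℂ] (ℂ × X)) := LinearMap.range L with hM
  have hMeq : (M : Set ((ℂ × X) →WOT[ℂ] (ℂ × X)))
      = ⇑(ContinuousLinearMap.toWOT ℂ (ℂ × X) (ℂ × X)) ''
          {P : (ℂ × X) →L[ℂ] (ℂ × X) | ∃ p : Polynomial ℂ, P = aeval A p} := by
    ext w
    constructor
    · rintro ⟨p, rfl⟩
      exact ⟨aeval A p, ⟨p, rfl⟩, rfl⟩
    · rintro ⟨P, ⟨p, rfl⟩, rfl⟩
      exact ⟨p, rfl⟩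
  have hMc : closure (⇑(ContinuousLinearMap.toWOT ℂ (ℂ × X) (ℂ × X)) ''
      {P : (ℂ × X) →L[ℂ] (ℂ × X) | ∃ p : Polynomial ℂ, P = aeval A p})
      = (M.topologicalClosure : Set ((ℂ × X) →WOT[ℂ] (ℂ × X))) := by
    rw [Submodule.topologicalClosure_coe, hMeq]
  have hE1 : (ContinuousLinearMap.toWOT ℂ (ℂ × X) (ℂ × X)) (dg 1 0) ∈ M.topologicalClosure := by
    have h0 := E1_mem T hT
    rw [← hA] at h0
    rw [← SetLike.mem_coe, ← hMc]
    exact h0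
  set 𝒞 : Set ((ℂ × X) →WOT[ℂ] (ℂ × X)) :=
    c12 ⁻¹' {0} ∩ c21 ⁻¹' {0} ∩ piW ⁻¹' CT with h𝒞
  have h𝒞closed : IsClosed 𝒞 :=
    ((isClosed_singleton.preimage c12_cont).inter
      (isClosed_singleton.preimage c21_cont)).inter (isClosed_closure.preimage piW_cont)
  apply le_antisymm
  · -- closure ⊆ image of the double commutant
    have hsub : ⇑(ContinuousLinearMap.toWOT ℂ (ℂ × X) (ℂ × X)) ''
        {P : (ℂ × X) →L[ℂ] (ℂ × X) | ∃ p : Polynomial ℂ, P = aeval A p} ⊆ 𝒞 := by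
      rintro w ⟨P, ⟨p, rfl⟩, rfl⟩
      have hP : aeval A p = dg (p.eval 1) (aeval T p) := by rw [hA]; exact aeval_prodMap T p
      refine ⟨⟨?_, ?_⟩, ?_⟩
      · rw [Set.mem_preimage, Set.mem_singleton_iff, c12_toWOT, hP, corner12_dg, map_zero]
      · rw [Set.mem_preimage, Set.mem_singleton_iff, c21_toWOT, hP, corner21_dg, map_zero]
      · rw [Set.mem_preimage, piW_toWOT, hP, corner22_dg]
        exact subset_closure ⟨aeval T p, ⟨p, rfl⟩, rfl⟩
    have hstep : closure (⇑(ContinuousLinearMap.toWOT ℂ (ℂ × X) (ℂ × X)) ''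
        {P : (ℂ × X) →L[ℂ] (ℂ × X) | ∃ p : Polynomial ℂ, P = aeval A p}) ⊆ 𝒞 :=
      closure_minimal hsub h𝒞closed
    refine hstep.trans ?_
    rintro w ⟨⟨h12, h21⟩, hpi⟩
    set S := (ContinuousLinearMap.toWOT ℂ (ℂ × X) (ℂ × X)).symm w with hS
    have hw : w = (ContinuousLinearMap.toWOT ℂ (ℂ × X) (ℂ × X)) S :=
      (LinearEquiv.apply_symm_apply _ w).symm
    have hc12 : (ContinuousLinearMap.fst ℂ ℂ X).comp
        (S.comp (ContinuousLinearMap.inr ℂ ℂ X)) = 0 := by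
      have h0 := h12
      rw [Set.mem_preimage, Set.mem_singleton_iff, hw, c12_toWOT] at h0
      exact (ContinuousLinearMap.toWOT ℂ X ℂ).map_eq_zero_iff.mp h0
    have hc21 : (ContinuousLinearMap.snd ℂ ℂ X).comp
        (S.comp (ContinuousLinearMap.inl ℂ ℂ X)) = 0 := by
      have h0 := h21
      rw [Set.mem_preimage, Set.mem_singleton_iff, hw, c21_toWOT] at h0
      exact (ContinuousLinearMap.toWOT ℂ ℂ X).map_eq_zero_iff.mp h0
    have h1 : ∀ x : X, (S (0, x)).1 = 0 := by
      intro x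
      have h0 := congrArg (fun f : X →L[ℂ] ℂ => f x) hc12
      simpa using h0
    have h2 : ∀ c : ℂ, (S (c, 0)).2 = 0 := by
      intro c
      have h0 := congrArg (fun f : ℂ →L[ℂ] X => f c) hc21
      simpa using h0
    have hdec := block_decomp S h1 h2
    refine ⟨S, ⟨(S (1, 0)).1,
      (ContinuousLinearMap.snd ℂ ℂ X).comp (S.comp (ContinuousLinearMap.inr ℂ ℂ X)), ?_, hdec⟩,
      hw.symm⟩
    have h0 := hpi
    rw [Set.mem_preimage, hw, piW_toWOT] at h0
    exact h0
  · -- image of the double commutant ⊆ closure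
    rintro w ⟨S, ⟨a, D, hD, rfl⟩, rfl⟩
    rw [hMc]
    have hdec : dg a D = a • dg 1 (0 : X →L[ℂ] X) + dg 0 D := by
      refine ContinuousLinearMap.ext fun z => ?_
      simp [dg_apply']
    have himg : iW '' (⇑(ContinuousLinearMap.toWOT ℂ X X) ''
        {P : X →L[ℂ] X | ∃ p : Polynomial ℂ, P = aeval T p})
        ⊆ (M.topologicalClosure : Set ((ℂ × X) →WOT[ℂ] (ℂ × X))) := by
      rintro w' ⟨w'', ⟨Q, ⟨p, rfl⟩, rfl⟩, rfl⟩
      rw [iW_toWOT]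
      have hQ : dg 0 (aeval T p) = aeval A p - (p.eval 1) • dg 1 (0 : X →L[ℂ] X) := by
        rw [hA, aeval_prodMap T p]
        refine ContinuousLinearMap.ext fun z => ?_
        simp [dg_apply']
      rw [hQ, map_sub, map_smul]
      refine Submodule.sub_mem _ ?_ (Submodule.smul_mem _ _ hE1)
      exact M.le_topologicalClosure ⟨p, rfl⟩
    have hiWD : iW ((ContinuousLinearMap.toWOT ℂ X X) D) ∈ M.topologicalClosure := by
      have hm1 : iW ((ContinuousLinearMap.toWOT ℂ X X) D) ∈ iW '' CT :=
        Set.mem_image_of_mem _ hD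
      have hm2 : iW '' CT ⊆ closure (iW '' (⇑(ContinuousLinearMap.toWOT ℂ X X) ''
          {P : X →L[ℂ] X | ∃ p : Polynomial ℂ, P = aeval T p})) := by
        rw [hCT]
        exact image_closure_subset_closure_image iW_cont
      have hm4 : closure (iW '' (⇑(ContinuousLinearMap.toWOT ℂ X X) ''
          {P : X →L[ℂ] X | ∃ p : Polynomial ℂ, P = aeval T p}))
          ⊆ (M.topologicalClosure : Set ((ℂ × X) →WOT[ℂ] (ℂ × X))) :=
        closure_minimal himg M.isClosed_topologicalClosure
      exact hm4 (hm2 hm1)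
    rw [iW_toWOT] at hiWD
    rw [hdec, map_add, map_smul]
    exact Submodule.add_mem _ (Submodule.smul_mem _ _ hE1) hiWD
end

section
/- Let φ : 𝔻 → 𝔻 be holomorphic with φ(z) = λ z^p ψ(z), where p ≥ 2, λ ≠ 0, ψ(0) = 1, and ψ does not vanish on 𝔻. Then there exists a holomorphic function u on 𝔻 with u(0) = 0, u'(0) = 1, satisfying Böttcher's equation u ∘ φ = λ u^p, and with ‖u‖_∞ ≤ ‖ψ‖_∞^{1/(p−1)} (in particular |λ|·‖u‖_∞^{p−1} ≤ ‖φ‖_∞ ≤ 1). -/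
open Complex Metric

lemma exists_log_on_ball {ψ : ℂ → ℂ}
    (hψhol : DifferentiableOn ℂ ψ (ball (0:ℂ) 1))
    (hψne : ∀ z ∈ ball (0:ℂ) 1, ψ z ≠ 0) (hψ0 : ψ 0 = 1) :
    ∃ g : ℂ → ℂ, DifferentiableOn ℂ g (ball (0:ℂ) 1) ∧ g 0 = 0 ∧
      ∀ z ∈ ball (0:ℂ) 1, Complex.exp (g z) = ψ z := by
  have hball : IsOpen (ball (0:ℂ) 1) := isOpen_ball
  -- the logarithmic derivative
  set q : ℂ → ℂ := fun w => deriv ψ w / ψ w with hq_def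
  have hψan : AnalyticOnNhd ℂ ψ (ball (0:ℂ) 1) := hψhol.analyticOnNhd hball
  have hq : ContinuousOn q (ball (0:ℂ) 1) :=
    (hψan.deriv.continuousOn).div hψhol.continuousOn hψne
  -- clamp function
  set c : ℝ → ℝ := fun t => min (max t 0) 1 with hc_def
  have hc_cont : Continuous c := (continuous_id.max continuous_const).min continuous_const
  have hc_mem : ∀ t, 0 ≤ c t ∧ c t ≤ 1 := fun t => ⟨le_min (le_max_right _ _) zero_le_one, min_le_right _ _⟩
  have hc_eq : ∀ t ∈ Set.Icc (0:ℝ) 1, c t = t := fun t ht => by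
    simp [hc_def, max_eq_left ht.1, min_eq_left ht.2]
  -- definition of g
  set g : ℂ → ℂ := fun z => z * ∫ t in (0:ℝ)..1, q ((c t : ℂ) * z) with hg_def
  have hg0 : g 0 = 0 := by simp [hg_def]
  -- continuity of g on the ball
  have hmemmul : ∀ (z : ℂ), z ∈ ball (0:ℂ) 1 → ∀ (t : ℝ), ((c t : ℂ) * z) ∈ ball (0:ℂ) 1 := by
    intro z hz t
    rw [mem_ball_zero_iff] at hz ⊢
    calc ‖(c t : ℂ) * z‖ = |c t| * ‖z‖ := by
          rw [norm_mul, Complex.norm_real, Real.norm_eq_abs]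
      _ ≤ 1 * ‖z‖ := by
          apply mul_le_mul_of_nonneg_right _ (norm_nonneg _)
          rw [_root_.abs_of_nonneg (hc_mem t).1]; exact (hc_mem t).2
      _ < 1 := by simpa using hz
  have hgcont : ContinuousOn g (ball (0:ℂ) 1) := by
    apply ContinuousOn.mul continuousOn_id
    rw [continuousOn_iff_continuous_restrict]
    have : (Set.restrict (ball (0:ℂ) 1) fun z => ∫ t in (0:ℝ)..1, q ((c t : ℂ) * z))
        = fun x : ball (0:ℂ) 1 => ∫ t in (0:ℝ)..1, (fun (x : ball (0:ℂ) 1) (t : ℝ) => q ((c t : ℂ) * (x : ℂ))) x t := rfl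
    change Continuous (fun x : ball (0:ℂ) 1 => ∫ t in (0:ℝ)..1, (fun (x : ball (0:ℂ) 1) (t : ℝ) => q ((c t : ℂ) * (x : ℂ))) x t)
    apply intervalIntegral.continuous_parametric_intervalIntegral_of_continuous'
    apply hq.comp_continuous
    · exact (Complex.continuous_ofReal.comp (hc_cont.comp continuous_snd)).mul
        (continuous_subtype_val.comp continuous_fst)
    · exact fun x => hmemmul _ x.1.2 _
  -- the exponential identity
  have hexp : ∀ z ∈ ball (0:ℂ) 1, Complex.exp (g z) = ψ z := by
    intro z hz
    rcases eq_or_ne z 0 with rfl | hz0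
    · simp [hg0, hψ0]
    have hzlt : ‖z‖ < 1 := mem_ball_zero_iff.1 hz
    have hznorm : (0:ℝ) < ‖z‖ := norm_pos_iff.2 hz0
    set T : ℝ := ‖z‖⁻¹ with hT_def
    have hT1 : 1 < T := (one_lt_inv₀ hznorm).2 hzlt
    have hmem : ∀ t ∈ Set.Ioo (-T) T, (t : ℂ) * z ∈ ball (0:ℂ) 1 := by
      intro t ht
      rw [mem_ball_zero_iff, norm_mul, Complex.norm_real, Real.norm_eq_abs]
      have : |t| < T := abs_lt.2 ⟨ht.1, ht.2⟩
      calc |t| * ‖z‖ < T * ‖z‖ := by exact mul_lt_mul_of_pos_right this hznorm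
        _ = 1 := by rw [hT_def]; exact inv_mul_cancel₀ hznorm.ne'
    set uu : ℝ → ℂ := fun t => q ((t:ℂ) * z) * z with huu_def
    have huucont : ContinuousOn uu (Set.Ioo (-T) T) := by
      apply ContinuousOn.mul _ continuousOn_const
      exact hq.comp ((Complex.continuous_ofReal.mul continuous_const).continuousOn) hmem
    set G : ℝ → ℂ := fun t => ∫ s in (0:ℝ)..t, uu s with hG_def
    have hIoosub : ∀ t ∈ Set.Ioo (-T) T, Set.uIcc (0:ℝ) t ⊆ Set.Ioo (-T) T := by
      intro t ht
      have h0 : (0:ℝ) ∈ Set.Ioo (-T) T :=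
        Set.mem_Ioo.2 ⟨neg_lt_zero.2 (lt_trans one_pos hT1), lt_trans one_pos hT1⟩
      exact Set.ordConnected_Ioo.uIcc_subset h0 ht
    have hGderiv : ∀ t ∈ Set.Ioo (-T) T, HasDerivAt G (uu t) t := by
      intro t ht
      apply intervalIntegral.integral_hasDerivAt_right
      · exact (huucont.mono (hIoosub t ht)).intervalIntegrable
      · exact (ContinuousOn.stronglyMeasurableAtFilter isOpen_Ioo huucont t ht)
      · exact (huucont.continuousAt (isOpen_Ioo.mem_nhds ht))
    set F : ℝ → ℂ := fun t => Complex.exp (-G t) * ψ ((t:ℂ) * z) with hF_def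
    have hFderiv : ∀ t ∈ Set.Ioo (-T) T, HasDerivAt F 0 t := by
      intro t ht
      have hw := hmem t ht
      have hψd : DifferentiableAt ℂ ψ ((t:ℂ) * z) := hψhol.differentiableAt (hball.mem_nhds hw)
      have hlin : HasDerivAt (fun s : ℝ => (s:ℂ) * z) z t := by
        simpa using (Complex.ofRealCLM.hasDerivAt (x := t)).mul_const z
      have h2 : HasDerivAt (fun s : ℝ => ψ ((s:ℂ) * z)) (z • deriv ψ ((t:ℂ)*z)) t :=
        (hψd.hasDerivAt).scomp t hlin
      have h1 : HasDerivAt (fun s : ℝ => Complex.exp (-G s)) (Complex.exp (-G t) * (-uu t)) t := by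
        have := ((hGderiv t ht).neg).cexp
        simpa using this
      have := h1.mul h2
      refine this.congr_deriv ?_
      have hψne' := hψne _ hw
      rw [huu_def]
      simp only [smul_eq_mul, hq_def]
      field_simp
      ring
    have hkey : F 1 = F 0 := by
      have hsub : Set.Icc (0:ℝ) 1 ⊆ Set.Ioo (-T) T := by
        intro t ht
        exact ⟨lt_of_lt_of_le (neg_lt_zero.2 (lt_trans one_pos hT1)) ht.1, lt_of_le_of_lt ht.2 hT1⟩
      have hcont : ContinuousOn F (Set.Icc (0:ℝ) 1) := by
        intro t ht
        exact ((hFderiv t (hsub ht)).continuousAt).continuousWithinAt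
      have := constant_of_has_deriv_right_zero hcont (fun t ht => ((hFderiv t (hsub (Set.mem_Icc.2 ⟨ht.1, ht.2.le⟩))).hasDerivWithinAt))
      exact this 1 (Set.mem_Icc.2 ⟨zero_le_one, le_rfl⟩)
    have hG0 : G 0 = 0 := by simp [hG_def]
    have hGg : G 1 = g z := by
      rw [hG_def, hg_def]
      simp only [huu_def]
      rw [intervalIntegral.integral_mul_const, mul_comm]
      congr 1
      apply intervalIntegral.integral_congr
      intro t ht
      rw [Set.uIcc_of_le zero_le_one] at ht
      simp only [hc_eq t ht]
    have hF1 : Complex.exp (-G 1) * ψ z = 1 := by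
      have := hkey
      rw [hF_def] at this
      simp only [hG0, Complex.ofReal_one, one_mul, Complex.ofReal_zero, zero_mul, hψ0, neg_zero,
        Complex.exp_zero, mul_one] at this
      simpa using this
    have : ψ z = Complex.exp (G 1) := by
      have hne : Complex.exp (-G 1) ≠ 0 := Complex.exp_ne_zero _
      have hEN : Complex.exp (G 1) * Complex.exp (-G 1) = 1 := by
        rw [← Complex.exp_add, add_neg_cancel, Complex.exp_zero]
      linear_combination (Complex.exp (G 1)) * hF1 - ψ z * hEN
    rw [← hGg, this]
  -- differentiability of g
  have hgdiff : DifferentiableOn ℂ g (ball (0:ℂ) 1) := by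
    intro z₀ hz₀
    have hψz₀ := hψne _ hz₀
    -- the comparison function
    set L : ℂ → ℂ := fun z => g z₀ + Complex.log (ψ z / ψ z₀) with hL_def
    set h : ℂ → ℂ := fun z => g z - L z with hh_def
    -- h is continuous at z₀ within a neighbourhood and takes values in 2πiℤ
    have hratio : ContinuousAt (fun z => ψ z / ψ z₀) z₀ :=
      (hψhol.continuousOn.continuousAt (hball.mem_nhds hz₀)).div_const _
    have hratio1 : ψ z₀ / ψ z₀ = 1 := div_self hψz₀
    have hLcont : ContinuousAt L z₀ := by
      apply ContinuousAt.add continuousAt_const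
      apply ContinuousAt.clog hratio
      rw [hratio1]; exact Complex.one_mem_slitPlane
    have hgcontz : ContinuousAt g z₀ := hgcont.continuousAt (hball.mem_nhds hz₀)
    have hhz₀ : h z₀ = 0 := by
      simp [hh_def, hL_def, hratio1, Complex.log_one]
    have hhcont : ContinuousAt h z₀ := hgcontz.sub hLcont
    -- find a neighbourhood where ‖h‖ < 1 and everything is in the ball and slitPlane
    have hsmall : ∀ᶠ z in nhds z₀, ‖h z‖ < 1 := by
      have := hhcont.tendsto
      rw [hhz₀] at this
      have := this (Metric.ball_mem_nhds 0 one_pos)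
      filter_upwards [this] with z hzz
      simpa [dist_eq_norm] using mem_ball_zero_iff.1 hzz
    have hslit : ∀ᶠ z in nhds z₀, ψ z / ψ z₀ ∈ Complex.slitPlane := by
      have := hratio.tendsto
      rw [hratio1] at this
      exact this (Complex.isOpen_slitPlane.mem_nhds Complex.one_mem_slitPlane)
    have hballn : ∀ᶠ z in nhds z₀, z ∈ ball (0:ℂ) 1 := hball.mem_nhds hz₀
    -- on this neighbourhood g = L
    have heq : ∀ᶠ z in nhds z₀, g z = L z := by
      filter_upwards [hsmall, hslit, hballn] with z h1 h2 h3
      have hψz := hψne _ h3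
      have hexph : Complex.exp (h z) = 1 := by
        rw [hh_def]
        simp only
        rw [Complex.exp_sub, hL_def]
        simp only
        rw [Complex.exp_add, hexp z h3, hexp z₀ hz₀,
          Complex.exp_log (div_ne_zero hψz hψz₀)]
        field_simp
      obtain ⟨n, hn⟩ := Complex.exp_eq_one_iff.1 hexph
      have hnormh : ‖h z‖ = |(n:ℝ)| * (2 * Real.pi) := by
        rw [hn, norm_mul]
        congr 1
        · rw [← Complex.ofReal_intCast, Complex.norm_real, Real.norm_eq_abs]
        · rw [norm_mul, Complex.norm_I, mul_one]
          norm_num [Complex.norm_real, Real.norm_eq_abs, _root_.abs_of_nonneg Real.pi_pos.le]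
      rw [hnormh] at h1
      have hn0 : n = 0 := by
        by_contra hne
        have : (1:ℝ) ≤ |(n:ℝ)| := by
          rw [← Int.cast_abs]
          exact_mod_cast Int.one_le_abs (by simpa using hne)
        nlinarith [Real.pi_gt_three]
      rw [hn0] at hn
      norm_num at hn
      exact sub_eq_zero.1 hn
    have hLdiff : DifferentiableAt ℂ L z₀ := by
      apply DifferentiableAt.add (differentiableAt_const _)
      apply DifferentiableAt.clog
      · exact (hψhol.differentiableAt (hball.mem_nhds hz₀)).div_const _
      · rw [hratio1]; exact Complex.one_mem_slitPlane
    exact ((Filter.EventuallyEq.differentiableAt_iff heq).2 hLdiff).differentiableWithinAt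
  exact ⟨g, hgdiff, hg0, hexp⟩

/-- **Böttcher's equation.** Let `φ : 𝔻 → 𝔻` be holomorphic with
`φ(z) = λ z^p ψ(z)`, `p ≥ 2`, `λ ≠ 0`, `ψ(0) = 1` and `ψ` non-vanishing on `𝔻`. Then there is
a holomorphic `u` on `𝔻` with `u(0) = 0`, `u'(0) = 1`, `u ∘ φ = λ uᵖ`, and
`‖u‖_∞ ≤ ‖ψ‖_∞^{1/(p−1)}`. -/
theorem bottcher_equation_solution
    (φ ψ : ℂ → ℂ) (p : ℕ) (hp : 2 ≤ p) (lam : ℂ) (hlam : lam ≠ 0)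
    (hφhol : DifferentiableOn ℂ φ (ball (0 : ℂ) 1))
    (hφself : ∀ z ∈ ball (0 : ℂ) 1, φ z ∈ ball (0 : ℂ) 1)
    (hψhol : DifferentiableOn ℂ ψ (ball (0 : ℂ) 1))
    (hform : ∀ z ∈ ball (0 : ℂ) 1, φ z = lam * z ^ p * ψ z)
    (hψ0 : ψ 0 = 1) (hψne : ∀ z ∈ ball (0 : ℂ) 1, ψ z ≠ 0) :
    ∃ u : ℂ → ℂ, DifferentiableOn ℂ u (ball (0 : ℂ) 1) ∧ u 0 = 0 ∧ deriv u 0 = 1 ∧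
      (∀ z ∈ ball (0 : ℂ) 1, u (φ z) = lam * (u z) ^ p) ∧
      ∀ C : ℝ, (∀ z ∈ ball (0 : ℂ) 1, ‖ψ z‖ ≤ C) →
        ∀ z ∈ ball (0 : ℂ) 1, ‖u z‖ ≤ C ^ ((1 : ℝ) / (p - 1)) := by
  obtain ⟨g, hgdiff, hg0, hgexp⟩ := exists_log_on_ball hψhol hψne hψ0
  have hball : IsOpen (ball (0:ℂ) 1) := isOpen_ball
  have h0mem : (0:ℂ) ∈ ball (0:ℂ) 1 := mem_ball_self one_pos
  have hp0 : p ≠ 0 := by omega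
  have hpR : (1:ℝ) < (p:ℝ) := by exact_mod_cast Nat.lt_of_lt_of_le one_lt_two hp
  have hpC : (p:ℂ) ≠ 0 := by exact_mod_cast Nat.cast_ne_zero.2 hp0
  have hφ0 : φ 0 = 0 := by
    rw [hform 0 h0mem, zero_pow hp0]; ring
  -- iterates stay in the ball and do not increase the norm
  have hiter : ∀ z ∈ ball (0:ℂ) 1, ∀ n : ℕ, φ^[n] z ∈ ball (0:ℂ) 1 ∧ ‖φ^[n] z‖ ≤ ‖z‖ := by
    intro z hz n
    induction n with
    | zero => exact ⟨hz, le_rfl⟩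
    | succ n ih =>
      rw [Function.iterate_succ_apply']
      refine ⟨hφself _ ih.1, ?_⟩
      have := Complex.norm_le_norm_of_mapsTo_ball hφhol
        (fun w hw => ball_subset_closedBall (hφself w hw)) hφ0 (mem_ball_zero_iff.1 ih.1)
      calc ‖φ (φ^[n] z)‖ ≤ ‖φ^[n] z‖ := this
        _ ≤ ‖z‖ := ih.2
  -- iterates are differentiable
  have hiterdiff : ∀ n : ℕ, DifferentiableOn ℂ (φ^[n]) (ball (0:ℂ) 1) := by
    intro n
    induction n with
    | zero => exact differentiableOn_id
    | succ n ih =>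
      rw [Function.iterate_succ']
      exact hφhol.comp ih (fun w hw => (hiter w hw n).1)
  -- the series
  set F : ℕ → ℂ → ℂ := fun n z => ((p:ℂ)^(n+1))⁻¹ * g (φ^[n] z) with hF_def
  set h : ℂ → ℂ := fun z => ∑' n, F n z with hh_def
  set u : ℂ → ℂ := fun z => z * Complex.exp (h z) with hu_def
  -- uniform bounds on closed balls
  have hbound : ∀ r : ℝ, 0 ≤ r → r < 1 → ∃ M : ℝ, 0 ≤ M ∧
      ∀ n : ℕ, ∀ z ∈ closedBall (0:ℂ) r, ‖F n z‖ ≤ M * ((p:ℝ)^(n+1))⁻¹ := by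
    intro r hr0 hr1
    have hsub : closedBall (0:ℂ) r ⊆ ball (0:ℂ) 1 := closedBall_subset_ball hr1
    obtain ⟨M, hM⟩ := (isCompact_closedBall (0:ℂ) r).exists_bound_of_continuousOn
      ((hgdiff.continuousOn).mono hsub)
    refine ⟨max M 0, le_max_right _ _, ?_⟩
    intro n z hz
    have hzball := hsub hz
    have hinball := (hiter z hzball n).1
    have hinclosed : φ^[n] z ∈ closedBall (0:ℂ) r := by
      rw [mem_closedBall_zero_iff]
      exact le_trans (hiter z hzball n).2 (mem_closedBall_zero_iff.1 hz)
    rw [hF_def]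
    simp only [norm_mul]
    rw [mul_comm]
    apply mul_le_mul (le_trans (hM _ hinclosed) (le_max_left _ _))
    · rw [norm_inv, norm_pow]
      simp [Complex.norm_natCast]
    · exact norm_nonneg _
    · exact le_max_right _ _
  -- geometric summability
  have hgeom : Summable (fun n : ℕ => ((p:ℝ)^(n+1))⁻¹) := by
    have h1 : Summable (fun n : ℕ => ((p:ℝ)⁻¹)^n) :=
      summable_geometric_of_lt_one (by positivity) (inv_lt_one_of_one_lt₀ hpR)
    have := h1.mul_left ((p:ℝ))⁻¹
    apply this.congr
    intro n
    rw [pow_succ, mul_inv, ← inv_pow]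
    ring
  -- h is differentiable on the ball
  have hFdiff : ∀ n : ℕ, DifferentiableOn ℂ (F n) (ball (0:ℂ) 1) := by
    intro n
    apply DifferentiableOn.const_mul
    exact hgdiff.comp (hiterdiff n) (fun w hw => (hiter w hw n).1)
  have hhdiff : DifferentiableOn ℂ h (ball (0:ℂ) 1) := by
    intro z₀ hz₀
    set r : ℝ := (‖z₀‖ + 1)/2 with hr_def
    have hz₀n : ‖z₀‖ < 1 := mem_ball_zero_iff.1 hz₀
    have hr0 : 0 ≤ r := by positivity
    have hr1 : r < 1 := by rw [hr_def]; linarith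
    obtain ⟨M, hM0, hM⟩ := hbound r hr0 hr1
    have hsub2 : ball (0:ℂ) r ⊆ ball (0:ℂ) 1 := ball_subset_ball hr1.le
    have : DifferentiableOn ℂ h (ball (0:ℂ) r) := by
      rw [hh_def]
      apply differentiableOn_tsum_of_summable_norm (hgeom.mul_left M)
        (fun n => (hFdiff n).mono hsub2) isOpen_ball
      intro n w hw
      exact hM n w (ball_subset_closedBall hw)
    have hz₀r : z₀ ∈ ball (0:ℂ) r := by
      rw [mem_ball_zero_iff]; rw [hr_def]; linarith
    exact ((this z₀ hz₀r).differentiableAt (isOpen_ball.mem_nhds hz₀r)).differentiableWithinAt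
  -- summability at each point
  have hsum : ∀ z ∈ ball (0:ℂ) 1, Summable (fun n => F n z) := by
    intro z hz
    have hzn : ‖z‖ < 1 := mem_ball_zero_iff.1 hz
    obtain ⟨M, hM0, hM⟩ := hbound ‖z‖ (norm_nonneg z) hzn
    apply Summable.of_norm_bounded (hgeom.mul_left M)
    intro n
    exact hM n z (mem_closedBall_zero_iff.2 le_rfl)
  -- h vanishes at 0
  have hh0 : h 0 = 0 := by
    rw [hh_def]
    have : ∀ n : ℕ, F n 0 = 0 := by
      intro n
      rw [hF_def]
      simp [Function.iterate_fixed hφ0, hg0]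
    simp only [this]
    exact tsum_zero
  -- the functional equation for h
  have hfunc : ∀ z ∈ ball (0:ℂ) 1, (p:ℂ) * h z = g z + h (φ z) := by
    intro z hz
    have hsumz := hsum z hz
    have hGsum : Summable (fun n : ℕ => ((p:ℂ)^n)⁻¹ * g (φ^[n] z)) := by
      have := hsumz.mul_left (p:ℂ)
      apply this.congr
      intro n
      rw [hF_def]
      simp only
      rw [← mul_assoc, pow_succ, mul_inv]
      field_simp
    calc (p:ℂ) * h z = ∑' n, (p:ℂ) * F n z := by rw [hh_def]; exact (tsum_mul_left).symm
      _ = ∑' n : ℕ, ((p:ℂ)^n)⁻¹ * g (φ^[n] z) := by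
          congr 1; funext n
          rw [hF_def]
          simp only
          rw [← mul_assoc, pow_succ, mul_inv]
          field_simp
      _ = ((p:ℂ)^0)⁻¹ * g (φ^[0] z) + ∑' n : ℕ, ((p:ℂ)^(n+1))⁻¹ * g (φ^[n+1] z) :=
          hGsum.tsum_eq_zero_add
      _ = g z + h (φ z) := by
          have e1 : ((p:ℂ)^0)⁻¹ * g (φ^[0] z) = g z := by simp
          have e2 : ∑' n : ℕ, ((p:ℂ)^(n+1))⁻¹ * g (φ^[n+1] z) = h (φ z) := by
            simp only [hh_def, hF_def]
            apply tsum_congr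
            intro n
            rw [Function.iterate_succ_apply]
          rw [e1, e2]
  -- conclusion
  refine ⟨u, ?_, ?_, ?_, ?_, ?_⟩
  · -- differentiability
    exact (differentiableOn_id.mul ((hhdiff.cexp)))
  · -- u 0 = 0
    rw [hu_def]; simp
  · -- deriv u 0 = 1
    have hhd : DifferentiableAt ℂ h 0 :=
      (hhdiff 0 h0mem).differentiableAt (hball.mem_nhds h0mem)
    have hE : HasDerivAt (fun z => Complex.exp (h z)) (Complex.exp (h 0) * deriv h 0) 0 :=
      (hhd.hasDerivAt).cexp
    have := (hasDerivAt_id (0:ℂ)).mul hE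
    have h2 : HasDerivAt u (1 * Complex.exp (h 0) + 0 * (Complex.exp (h 0) * deriv h 0)) 0 := by
      exact this
    have := h2.deriv
    rw [this, hh0]
    simp
  · -- the functional equation
    intro z hz
    have hφz := hφself z hz
    show φ z * Complex.exp (h (φ z)) = lam * (z * Complex.exp (h z)) ^ p
    nth_rewrite 1 [hform z hz]
    rw [← hgexp z hz]
    have : Complex.exp (g z) * Complex.exp (h (φ z)) = Complex.exp ((p:ℂ) * h z) := by
      rw [← Complex.exp_add, hfunc z hz]
    calc lam * z ^ p * Complex.exp (g z) * Complex.exp (h (φ z))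
        = lam * z ^ p * Complex.exp ((p:ℂ) * h z) := by rw [mul_assoc, this]
      _ = lam * (z * Complex.exp (h z)) ^ p := by
          rw [mul_pow, ← Complex.exp_nat_mul]
          ring
  · -- the bound
    intro C hC z hz
    have hC1 : (1:ℝ) ≤ C := by
      have := hC 0 h0mem
      rwa [hψ0, norm_one] at this
    have hC0 : (0:ℝ) < C := lt_of_lt_of_le one_pos hC1
    have hzn : ‖z‖ < 1 := mem_ball_zero_iff.1 hz
    have hsumz := hsum z hz
    -- real part estimate
    have hre : (h z).re ≤ Real.log C / ((p:ℝ) - 1) := by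
      have hre_eq : (h z).re = ∑' n, (F n z).re := by
        rw [hh_def]
        exact Complex.re_tsum hsumz
      have hterm : ∀ n : ℕ, (F n z).re = ((p:ℝ)^(n+1))⁻¹ * (g (φ^[n] z)).re := by
        intro n
        rw [hF_def]
        simp only
        have : ((p:ℂ)^(n+1))⁻¹ = (((((p:ℝ)^(n+1))⁻¹ : ℝ)) : ℂ) := by push_cast; ring
        rw [this, Complex.re_ofReal_mul]
      have hgre : ∀ n : ℕ, (g (φ^[n] z)).re ≤ Real.log C := by
        intro n
        have hmem := (hiter z hz n).1
        have : Real.exp ((g (φ^[n] z)).re) = ‖ψ (φ^[n] z)‖ := by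
          rw [← hgexp _ hmem, Complex.norm_exp]
        rw [← Real.exp_le_exp, this, Real.exp_log hC0]
        exact hC _ hmem
      have hsumre : Summable (fun n => (F n z).re) :=
        (Complex.hasSum_re hsumz.hasSum).summable
      have h1 : (h z).re ≤ ∑' n, ((p:ℝ)^(n+1))⁻¹ * Real.log C := by
        rw [hre_eq]
        apply Summable.tsum_le_tsum _ hsumre (hgeom.mul_right _)
        intro n
        rw [hterm n]
        apply mul_le_mul_of_nonneg_left (hgre n) (by positivity)
      have hS : ∑' n : ℕ, ((p:ℝ)^(n+1))⁻¹ = ((p:ℝ) - 1)⁻¹ := by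
        have hgeo : ∑' n : ℕ, ((p:ℝ)⁻¹)^n = (1 - (p:ℝ)⁻¹)⁻¹ :=
          tsum_geometric_of_lt_one (by positivity) (inv_lt_one_of_one_lt₀ hpR)
        have : (fun n : ℕ => ((p:ℝ)^(n+1))⁻¹) = fun n => (p:ℝ)⁻¹ * ((p:ℝ)⁻¹)^n := by
          funext n
          rw [pow_succ, mul_inv, ← inv_pow]
          ring
        rw [this, tsum_mul_left, hgeo]
        have hp1 : (p:ℝ) - 1 ≠ 0 := by linarith
        have hpne : (p:ℝ) ≠ 0 := by linarith
        rw [← mul_inv]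
        congr 1
        field_simp
      have h2 : ∑' n : ℕ, ((p:ℝ)^(n+1))⁻¹ * Real.log C = Real.log C / ((p:ℝ) - 1) := by
        rw [tsum_mul_right, hS, div_eq_mul_inv, mul_comm]
      rw [← h2]; exact h1
    -- final estimate
    have hnorm : ‖u z‖ = ‖z‖ * Real.exp ((h z).re) := by
      rw [hu_def]
      simp only [norm_mul]
      rw [Complex.norm_exp]
    rw [hnorm]
    have hrpow : C ^ ((1:ℝ)/((p:ℝ) - 1)) = Real.exp (Real.log C / ((p:ℝ) - 1)) := by
      rw [Real.rpow_def_of_pos hC0]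
      congr 1
      ring
    rw [hrpow]
    calc ‖z‖ * Real.exp ((h z).re) ≤ 1 * Real.exp (Real.log C / ((p:ℝ) - 1)) := by
          apply mul_le_mul hzn.le (Real.exp_le_exp.2 hre) (Real.exp_pos _).le zero_le_one
      _ = _ := one_mul _
end
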